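/- arXiv:1304.7751 — 3 statements merged into one kernel-verified Lean document; each statement's English description precedes it below -/
import Mathlib

section
/- Let n ≥ m ≥ k ≥ 1 be integers and let B be an m×n complex matrix satisfying B B* = I_m, where B* denotes the conjugate transpose. Then for every real ε > 0, the sum over all k-element subsets s of {1,…,n} of det(ε·I_k + B_s* B_s) equals ∑_{l=0}^{k} C(n−l, k−l) · C(m, l) · ε^{k−l}. (Each matrix ε·I_k + B_s* B_s is Hermitian positive definite, so each determinant is a positive real number.) -/
open Matrix Finset

/-- The `m × k` submatrix of an `m × n` matrix `B` consisting of the columns of `B`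
indexed by the subset `s`. -/
def colSubmatrix {m n : ℕ} (B : Matrix (Fin m) (Fin n) ℂ) (s : Finset (Fin n)) :
    Matrix (Fin m) {j // j ∈ s} ℂ :=
  Matrix.of fun i j => B i (j : Fin n)

section Aux

variable {ι : Type*} [Fintype ι] [DecidableEq ι] {R : Type*} [CommRing R]

lemma aux_det_piecewise_one (A : Matrix ι ι R) (s : Finset ι) :
    (Matrix.of (s.piecewise (fun i => (1 : Matrix ι ι R) i) (fun i => A i))).det
      = (A.submatrix (Subtype.val : {a // ¬ a ∈ s} → ι) Subtype.val).det := by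
  set M : Matrix ι ι R := Matrix.of (s.piecewise (fun i => (1 : Matrix ι ι R) i) (fun i => A i))
  rw [← Matrix.det_submatrix_equiv_self (Equiv.sumCompl (fun a => a ∈ s)) M]
  have hM : M.submatrix (Equiv.sumCompl (fun a => a ∈ s)) (Equiv.sumCompl (fun a => a ∈ s))
      = Matrix.fromBlocks 1 0
      (Matrix.of fun (i : {a // ¬ a ∈ s}) (j : {a // a ∈ s}) => A i.1 j.1)
      (A.submatrix Subtype.val Subtype.val) := by
    ext i j
    cases i with
    | inl i =>
      cases j with
      | inl j =>
        have : M i.1 j.1 = (1 : Matrix ι ι R) i.1 j.1 := by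
          simp [M, Finset.piecewise, i.2]
        simp only [Matrix.submatrix_apply, Equiv.sumCompl_apply_inl, this,
          Matrix.fromBlocks_apply₁₁, Matrix.one_apply, Subtype.ext_iff]
      | inr j =>
        have hij : i.1 ≠ j.1 := fun h => j.2 (h ▸ i.2)
        have : M i.1 j.1 = (1 : Matrix ι ι R) i.1 j.1 := by
          simp [M, Finset.piecewise, i.2]
        simp [Matrix.submatrix_apply, this, Matrix.one_apply, hij]
    | inr i =>
      have : ∀ j, M i.1 j = A i.1 j := by
        intro j; simp [M, Finset.piecewise, i.2]
      cases j with
      | inl j => simp [Matrix.submatrix_apply, this]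
      | inr j => simp [Matrix.submatrix_apply, this]
  rw [hM, Matrix.det_fromBlocks_zero₁₂, Matrix.det_one, one_mul]

lemma aux_det_smul_one_add (x : R) (A : Matrix ι ι R) :
    (x • (1 : Matrix ι ι R) + A).det
      = ∑ t : Finset ι, x ^ (Fintype.card ι - t.card)
          * (A.submatrix (Subtype.val : {a // a ∈ t} → ι) Subtype.val).det := by
  classical
  have key : (x • (1 : Matrix ι ι R) + A)
      = Matrix.of ((fun i => x • (1 : Matrix ι ι R) i) + (fun i => A i)) := by
    ext i j
    simp [Matrix.add_apply, Matrix.smul_apply]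
  rw [key]
  have expand := (Matrix.detRowAlternating (R := R) (n := ι)).toMultilinearMap.map_add_univ
      (fun i => x • (1 : Matrix ι ι R) i) (fun i => A i)
  have hdet : (Matrix.of ((fun i => x • (1 : Matrix ι ι R) i) + (fun i => A i))).det
      = (Matrix.detRowAlternating (R := R) (n := ι)).toMultilinearMap
          ((fun i => x • (1 : Matrix ι ι R) i) + (fun i => A i)) := rfl
  rw [hdet, expand]
  have step : ∀ s : Finset ι,
      (Matrix.detRowAlternating (R := R) (n := ι)).toMultilinearMap
          (s.piecewise (fun i => x • (1 : Matrix ι ι R) i) (fun i => A i))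
        = x ^ s.card * (A.submatrix (Subtype.val : {a // ¬ a ∈ s} → ι) Subtype.val).det := by
    intro s
    have hpw : s.piecewise (fun i => x • (1 : Matrix ι ι R) i) (fun i => A i)
        = s.piecewise
            (fun i => x • (s.piecewise (fun i => (1 : Matrix ι ι R) i) (fun i => A i)) i)
            (s.piecewise (fun i => (1 : Matrix ι ι R) i) (fun i => A i)) := by
      funext i
      by_cases h : i ∈ s <;> simp [Finset.piecewise, h]
    rw [hpw, MultilinearMap.map_piecewise_smul]
    rw [Finset.prod_const, smul_eq_mul]
    congr 1
    exact aux_det_piecewise_one A s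
  rw [Finset.sum_congr rfl (fun s _ => step s)]
  refine Fintype.sum_bijective (fun t : Finset ι => tᶜ) compl_involutive.bijective _ _ ?_
  intro t
  have hc : Fintype.card ι - (tᶜ : Finset ι).card = t.card := by
    rw [Finset.card_compl]
    have := Finset.card_le_univ t
    omega
  have hd : (A.submatrix (Subtype.val : {a // ¬ a ∈ t} → ι) Subtype.val).det
      = (A.submatrix (Subtype.val : {a // a ∈ tᶜ} → ι) Subtype.val).det := by
    rw [← Matrix.det_submatrix_equiv_self
      (Equiv.subtypeEquivRight (fun a => by simp : ∀ a, a ∈ tᶜ ↔ ¬ a ∈ t))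
      (A.submatrix Subtype.val Subtype.val)]
    congr 1
  rw [hc, hd]

/-- Sum over finsets of a subtype equals sum over the powerset. -/
lemma aux_sum_finset_subtype {M : Type*} [AddCommMonoid M] (s : Finset ι)
    (f : Finset ι → M) :
    ∑ t : Finset {x // x ∈ s}, f (t.map (Function.Embedding.subtype _))
      = ∑ t ∈ s.powerset, f t := by
  classical
  refine Finset.sum_nbij' (fun t => t.map (Function.Embedding.subtype _))
    (fun t => t.subtype (· ∈ s)) ?_ ?_ ?_ ?_ ?_
  · intro t _
    simp only [Finset.mem_powerset]
    intro x hx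
    rcases Finset.mem_map.1 hx with ⟨a, _, rfl⟩
    exact a.2
  · intro t _; exact Finset.mem_univ _
  · intro t _
    ext x
    constructor
    · intro hx
      rw [Finset.mem_subtype, Finset.mem_map] at hx
      obtain ⟨a, ha, hae⟩ := hx
      have : a = x := Subtype.ext hae
      exact this ▸ ha
    · intro hx
      rw [Finset.mem_subtype, Finset.mem_map]
      exact ⟨x, hx, rfl⟩
  · intro t ht
    simp only [Finset.subtype_map]
    exact Finset.filter_true_of_mem (fun x hx => Finset.mem_powerset.1 ht hx)
  · intro t _; rfl

lemma aux_card_filter (t : Finset ι) (k : ℕ) (htk : t.card ≤ k) :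
    (((Finset.univ : Finset ι).powersetCard k).filter (fun s => t ⊆ s)).card
      = (Fintype.card ι - t.card).choose (k - t.card) := by
  classical
  rw [show Fintype.card ι - t.card = (tᶜ : Finset ι).card from (Finset.card_compl t).symm,
    ← Finset.card_powersetCard]
  refine Finset.card_nbij' (fun s => s \ t) (fun r => r ∪ t) ?_ ?_ ?_ ?_
  · intro s hs
    simp only [Finset.mem_coe, Finset.mem_filter, Finset.mem_powersetCard_univ] at hs
    simp only [Finset.mem_coe, Finset.mem_powersetCard]
    refine ⟨fun x hx => ?_, ?_⟩
    · simp only [Finset.mem_compl]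
      exact (Finset.mem_sdiff.1 hx).2
    · rw [Finset.card_sdiff_of_subset hs.2, hs.1]
  · intro r hr
    simp only [Finset.mem_coe, Finset.mem_powersetCard] at hr
    have hdisj : Disjoint r t := by
      refine Finset.disjoint_left.2 (fun x hx hxt => ?_)
      have := hr.1 hx
      simp only [Finset.mem_compl] at this
      exact this hxt
    simp only [Finset.mem_coe, Finset.mem_filter, Finset.mem_powersetCard_univ]
    constructor
    · rw [Finset.card_union_of_disjoint hdisj, hr.2, Nat.sub_add_cancel htk]
    · exact Finset.subset_union_right
  · intro s hs
    simp only [Finset.mem_coe, Finset.mem_filter] at hs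
    exact Finset.sdiff_union_of_subset hs.2
  · intro r hr
    simp only [Finset.mem_coe, Finset.mem_powersetCard] at hr
    refine Finset.union_sdiff_cancel_right ?_
    refine Finset.disjoint_left.2 (fun x hx hxt => ?_)
    have := hr.1 hx
    simp only [Finset.mem_compl] at this
    exact this hxt

end Aux

/-- The principal minor of `BᴴB` on `t` is `Bₜᴴ Bₜ`. -/
lemma aux_submatrix_conjT_mul {m n : ℕ} (B : Matrix (Fin m) (Fin n) ℂ) (t : Finset (Fin n)) :
    ((Bᴴ * B).submatrix (Subtype.val : {a // a ∈ t} → Fin n) Subtype.val)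
      = (colSubmatrix B t)ᴴ * colSubmatrix B t := by
  ext i j
  simp [Matrix.mul_apply, colSubmatrix, Matrix.conjTranspose_apply]

/-- Weinstein–Aronszajn evaluation. -/
lemma aux_det_eval {m n : ℕ} (hmn : m ≤ n) (B : Matrix (Fin m) (Fin n) ℂ)
    (hB : B * Bᴴ = 1) (x : ℂ) (hx : x ≠ 0) :
    (x • (1 : Matrix (Fin n) (Fin n) ℂ) + Bᴴ * B).det = x ^ (n - m) * (x + 1) ^ m := by
  have h1 : x • (1 : Matrix (Fin n) (Fin n) ℂ) + Bᴴ * B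
      = x • ((1 : Matrix (Fin n) (Fin n) ℂ) + (x⁻¹ • Bᴴ) * B) := by
    rw [Matrix.smul_mul, smul_add, smul_smul, mul_inv_cancel₀ hx, one_smul]
  rw [h1, Matrix.det_smul, Matrix.det_one_add_mul_comm, Matrix.mul_smul, hB]
  have h2 : (1 : Matrix (Fin m) (Fin m) ℂ) + x⁻¹ • (1 : Matrix (Fin m) (Fin m) ℂ)
      = (1 + x⁻¹) • (1 : Matrix (Fin m) (Fin m) ℂ) := by
    rw [add_smul, one_smul]
  rw [h2, Matrix.det_smul, Matrix.det_one, mul_one]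
  simp only [Fintype.card_fin]
  have hxn : x ^ n = x ^ (n - m) * x ^ m := by
    rw [← pow_add, Nat.sub_add_cancel hmn]
  rw [hxn, mul_assoc, ← mul_pow]
  congr 2
  field_simp

lemma aux_coeff (n : ℕ) (c : ℕ → ℂ) (l : ℕ) (hl : l ≤ n) :
    (∑ j ∈ Finset.range (n + 1), Polynomial.C (c j) * Polynomial.X ^ (n - j)).coeff (n - l)
      = c l := by
  rw [Polynomial.finset_sum_coeff]
  rw [Finset.sum_eq_single l]
  · simp [Polynomial.coeff_C_mul, Polynomial.coeff_X_pow]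
  · intro j hj hne
    rw [Polynomial.coeff_C_mul, Polynomial.coeff_X_pow, if_neg, mul_zero]
    have hj' : j ≤ n := Nat.lt_succ_iff.1 (Finset.mem_range.1 hj)
    intro h
    exact hne (by omega)
  · intro h
    exact absurd (Finset.mem_range.2 (Nat.lt_succ_of_le hl)) h

/-- Sum of principal minors of a fixed size. -/
lemma aux_sum_minor {m n : ℕ} (hmn : m ≤ n) (B : Matrix (Fin m) (Fin n) ℂ)
    (hB : B * Bᴴ = 1) (l : ℕ) (hl : l ≤ n) :
    ∑ t ∈ (Finset.univ : Finset (Fin n)).powersetCard l,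
        ((colSubmatrix B t)ᴴ * colSubmatrix B t).det = (m.choose l : ℂ) := by
  classical
  set Sf : ℕ → ℂ := fun j => ∑ t ∈ (Finset.univ : Finset (Fin n)).powersetCard j,
      ((colSubmatrix B t)ᴴ * colSubmatrix B t).det with hSf
  set P : Polynomial ℂ := ∑ j ∈ Finset.range (n + 1), Polynomial.C (Sf j) * Polynomial.X ^ (n - j)
  set Q : Polynomial ℂ := ∑ j ∈ Finset.range (n + 1),
      Polynomial.C ((m.choose j : ℂ)) * Polynomial.X ^ (n - j)
  have heval : ∀ x : ℂ, x ≠ 0 → P.eval x = x ^ (n - m) * (x + 1) ^ m := by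
    intro x hx
    have hL := aux_det_smul_one_add x (Bᴴ * B)
    have hL2 : (x • (1 : Matrix (Fin n) (Fin n) ℂ) + Bᴴ * B).det
        = ∑ t : Finset (Fin n), x ^ (n - t.card)
            * ((colSubmatrix B t)ᴴ * colSubmatrix B t).det := by
      rw [hL]
      refine Finset.sum_congr rfl (fun t _ => ?_)
      rw [aux_submatrix_conjT_mul, Fintype.card_fin]
    have hgroup : ∑ t : Finset (Fin n), x ^ (n - t.card)
          * ((colSubmatrix B t)ᴴ * colSubmatrix B t).det
        = ∑ j ∈ Finset.range (n + 1), Sf j * x ^ (n - j) := by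
      rw [← Finset.powerset_univ, Finset.sum_powerset]
      rw [Finset.card_univ, Fintype.card_fin]
      refine Finset.sum_congr rfl (fun j _ => ?_)
      rw [hSf]
      rw [Finset.sum_mul]
      refine Finset.sum_congr rfl (fun t ht => ?_)
      rw [(Finset.mem_powersetCard.1 ht).2, mul_comm]
    have hP : P.eval x = ∑ j ∈ Finset.range (n + 1), Sf j * x ^ (n - j) := by
      simp [P, Polynomial.eval_finset_sum]
    rw [hP, ← hgroup, ← hL2, aux_det_eval hmn B hB x hx]
  have hevalQ : ∀ x : ℂ, x ≠ 0 → Q.eval x = x ^ (n - m) * (x + 1) ^ m := by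
    intro x hx
    have hQ : Q.eval x = ∑ j ∈ Finset.range (n + 1), (m.choose j : ℂ) * x ^ (n - j) := by
      simp [Q, Polynomial.eval_finset_sum]
    rw [hQ]
    have hsub : ∑ j ∈ Finset.range (n + 1), (m.choose j : ℂ) * x ^ (n - j)
        = ∑ j ∈ Finset.range (m + 1), (m.choose j : ℂ) * x ^ (n - j) := by
      refine (Finset.sum_subset (by intro j hj; simp only [Finset.mem_range] at *; omega) ?_).symm
      intro j hj hj'
      simp only [Finset.mem_range] at hj hj'
      rw [Nat.choose_eq_zero_of_lt (by omega)]
      simp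
    rw [hsub]
    have hrw : ∀ j ∈ Finset.range (m + 1), (m.choose j : ℂ) * x ^ (n - j)
        = x ^ (n - m) * ((m.choose j : ℂ) * x ^ (m - j)) := by
      intro j hj
      simp only [Finset.mem_range] at hj
      rw [← mul_assoc, mul_comm (x ^ (n-m)), mul_assoc, ← pow_add]
      congr 2
      omega
    rw [Finset.sum_congr rfl hrw, ← Finset.mul_sum]
    congr 1
    rw [add_pow]
    rw [← Finset.sum_range_reflect (fun j => x ^ j * 1 ^ (m - j) * (m.choose j : ℂ)) (m + 1)]
    refine Finset.sum_congr rfl (fun j hj => ?_)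
    simp only [Finset.mem_range] at hj
    have hjm : j ≤ m := by omega
    simp only [Nat.add_sub_cancel]
    rw [Nat.choose_symm hjm, Nat.sub_sub_self hjm, one_pow, mul_one, mul_comm]
  have hPQ : P = Q := by
    refine Polynomial.eq_of_infinite_eval_eq P Q ?_
    have hsub : (Complex.ofReal '' Set.Ioi 0) ⊆ {x | P.eval x = Q.eval x} := by
      rintro _ ⟨r, hr, rfl⟩
      have hr0 : (r : ℂ) ≠ 0 := by
        simp only [ne_eq, Complex.ofReal_eq_zero]
        exact ne_of_gt hr
      simp only [Set.mem_setOf_eq]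
      rw [heval _ hr0, hevalQ _ hr0]
    refine Set.Infinite.mono hsub ?_
    exact (Set.Ioi_infinite 0).image (Complex.ofReal_injective.injOn)
  have h1 : P.coeff (n - l) = Sf l := aux_coeff n Sf l hl
  have h2 : Q.coeff (n - l) = (m.choose l : ℂ) := aux_coeff n _ l hl
  rw [hPQ, h2] at h1
  exact h1.symm

lemma aux_minor_map {m n : ℕ} (B : Matrix (Fin m) (Fin n) ℂ) (s : Finset (Fin n))
    (t : Finset {j // j ∈ s}) :
    (((colSubmatrix B s)ᴴ * colSubmatrix B s).submatrix
        (Subtype.val : {a // a ∈ t} → {j // j ∈ s}) Subtype.val).det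
      = ((colSubmatrix B (t.map (Function.Embedding.subtype _)))ᴴ
          * colSubmatrix B (t.map (Function.Embedding.subtype _))).det := by
  classical
  set t' := t.map (Function.Embedding.subtype _) with ht'
  have hmem : ∀ y : {j // j ∈ t'}, (y : Fin n) ∈ s := by
    intro y
    obtain ⟨a, ha, hae⟩ := Finset.mem_map.1 y.2
    exact hae ▸ a.2
  have hmem2 : ∀ y : {j // j ∈ t'}, (⟨y.1, hmem y⟩ : {j // j ∈ s}) ∈ t := by
    intro y
    obtain ⟨a, ha, hae⟩ := Finset.mem_map.1 y.2
    have hay : a = ⟨y.1, hmem y⟩ := Subtype.ext hae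
    exact hay ▸ ha
  let e : {a // a ∈ t} ≃ {j // j ∈ t'} :=
    { toFun := fun x => ⟨x.1.1, Finset.mem_map.2 ⟨x.1, x.2, rfl⟩⟩
      invFun := fun y => ⟨⟨y.1, hmem y⟩, hmem2 y⟩
      left_inv := fun x => by ext; rfl
      right_inv := fun y => by ext; rfl }
  have hmat : ((colSubmatrix B s)ᴴ * colSubmatrix B s).submatrix
      (Subtype.val : {a // a ∈ t} → {j // j ∈ s}) Subtype.val
      = ((colSubmatrix B t')ᴴ * colSubmatrix B t').submatrix e e := by
    ext i j
    simp [colSubmatrix, Matrix.mul_apply, Matrix.conjTranspose_apply, e]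
  rw [hmat, Matrix.det_submatrix_equiv_self]

/-- For `n ≥ m ≥ k ≥ 1` and an `m × n` complex matrix `B` with
`B Bᴴ = I`, for every `ε > 0` the sum over all `k`-element subsets `s` of the columns of
`det (ε • I + Bₛᴴ Bₛ)` equals `∑_{l=0}^{k} C(n-l, k-l) C(m, l) ε^(k-l)`. -/
theorem sum_det_eps_add_conjTranspose_mul_submatrix
    (n m k : ℕ) (hk : 1 ≤ k) (hkm : k ≤ m) (hmn : m ≤ n)
    (B : Matrix (Fin m) (Fin n) ℂ) (hB : B * Bᴴ = 1)
    (ε : ℝ) (hε : 0 < ε) :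
    ∑ s ∈ Finset.univ.powersetCard k,
        ((ε : ℂ) • 1 + (colSubmatrix B s)ᴴ * colSubmatrix B s).det
      = ∑ l ∈ Finset.range (k + 1),
          ((n - l).choose (k - l) : ℂ) * (m.choose l : ℂ) * (ε : ℂ) ^ (k - l) := by
  classical
  have hkn : k ≤ n := le_trans hkm hmn
  have step1 : ∀ s ∈ (Finset.univ : Finset (Fin n)).powersetCard k,
      ((ε : ℂ) • 1 + (colSubmatrix B s)ᴴ * colSubmatrix B s).det
        = ∑ t ∈ s.powerset, (ε : ℂ) ^ (k - t.card)
            * ((colSubmatrix B t)ᴴ * colSubmatrix B t).det := by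
    intro s hs
    have hcard : s.card = k := Finset.mem_powersetCard_univ.1 hs
    have hFc : Fintype.card {j // j ∈ s} = k := by
      rw [Fintype.card_coe, hcard]
    rw [aux_det_smul_one_add]
    rw [← aux_sum_finset_subtype s
      (fun t => (ε : ℂ) ^ (k - t.card) * ((colSubmatrix B t)ᴴ * colSubmatrix B t).det)]
    refine Finset.sum_congr rfl (fun t _ => ?_)
    rw [hFc, aux_minor_map, Finset.card_map]
  rw [Finset.sum_congr rfl step1]
  set F : Finset (Fin n) → ℂ := fun t =>
    (ε : ℂ) ^ (k - t.card) * ((colSubmatrix B t)ᴴ * colSubmatrix B t).det with hFdef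
  have step2 : ∑ s ∈ (Finset.univ : Finset (Fin n)).powersetCard k, ∑ t ∈ s.powerset, F t
      = ∑ t ∈ (Finset.univ : Finset (Fin n)).powerset,
          ((((Finset.univ : Finset (Fin n)).powersetCard k).filter
              (fun s => t ⊆ s)).card : ℂ) * F t := by
    rw [Finset.sum_comm' (t' := (Finset.univ : Finset (Fin n)).powerset)
      (s' := fun t => ((Finset.univ : Finset (Fin n)).powersetCard k).filter (fun s => t ⊆ s))
      (fun s t => by
        simp only [Finset.mem_powerset, Finset.mem_filter, Finset.subset_univ, and_true])]
    refine Finset.sum_congr rfl (fun t _ => ?_)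
    rw [Finset.sum_const, nsmul_eq_mul]
  rw [step2, Finset.sum_powerset]
  have huniv : ((Finset.univ : Finset (Fin n)).card) = n := by simp
  have step3 : ∀ j ∈ Finset.range ((Finset.univ : Finset (Fin n)).card + 1),
      (∑ t ∈ (Finset.univ : Finset (Fin n)).powersetCard j,
        ((((Finset.univ : Finset (Fin n)).powersetCard k).filter
            (fun s => t ⊆ s)).card : ℂ) * F t)
      = if j ≤ k then ((n - j).choose (k - j) : ℂ) * (m.choose j : ℂ) * (ε : ℂ) ^ (k - j)
        else 0 := by
    intro j hj
    rw [Finset.mem_range, huniv] at hj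
    by_cases hjk : j ≤ k
    · rw [if_pos hjk]
      have hterm : ∀ t ∈ (Finset.univ : Finset (Fin n)).powersetCard j,
          ((((Finset.univ : Finset (Fin n)).powersetCard k).filter
              (fun s => t ⊆ s)).card : ℂ) * F t
            = ((n - j).choose (k - j) : ℂ) * (ε : ℂ) ^ (k - j)
              * ((colSubmatrix B t)ᴴ * colSubmatrix B t).det := by
        intro t ht
        have htc : t.card = j := Finset.mem_powersetCard_univ.1 ht
        have hcf := aux_card_filter t k (htc ▸ hjk)
        simp only [hFdef, hcf, htc, Fintype.card_fin]
        all_goals ring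
      rw [Finset.sum_congr rfl hterm, ← Finset.mul_sum,
        aux_sum_minor hmn B hB j (by omega)]
      ring
    · rw [if_neg hjk]
      have hempty : ∀ t ∈ (Finset.univ : Finset (Fin n)).powersetCard j,
          (((Finset.univ : Finset (Fin n)).powersetCard k).filter
              (fun s => t ⊆ s)) = ∅ := by
        intro t ht
        have htc : t.card = j := Finset.mem_powersetCard_univ.1 ht
        refine Finset.filter_eq_empty_iff.2 (fun s hs hts => ?_)
        have hsc : s.card = k := Finset.mem_powersetCard_univ.1 hs
        have := Finset.card_le_card hts
        omega
      refine Finset.sum_eq_zero (fun t ht => ?_)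
      rw [hempty t ht]
      simp
  rw [Finset.sum_congr rfl step3, huniv]
  rw [← Finset.sum_subset (Finset.range_subset_range.2 (by omega : k + 1 ≤ n + 1))
    (fun j _ hj => by rw [if_neg (by simpa [Nat.lt_succ_iff] using hj : ¬ j ≤ k)])]
  refine Finset.sum_congr rfl (fun j hj => ?_)
  rw [if_pos (by simpa [Nat.lt_succ_iff] using hj)]
end

section
/- Let n ≥ m ≥ k ≥ 1 be integers and let B be an m×n complex matrix satisfying B B* = I_m. Then for every real ε > 0, the sum over all k-element subsets s of {1,…,n} of det(ε·I_k + B_s* B_s) is at least C(m,k) and at most C(m,k)·(1+√ε)^{n+k}. -/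
open Matrix Finset

section Helpers

open Equiv Equiv.Perm Function

variable {R : Type*} [CommRing R]

theorem cauchyBinet {κ ι : Type*} [Fintype κ] [DecidableEq κ] [Fintype ι] [DecidableEq ι]
    (A : Matrix κ ι R) (Bm : Matrix ι κ R) :
    (A * Bm).det = ∑ s ∈ (univ : Finset ι).powersetCard (Fintype.card κ),
      ((A.submatrix id (Subtype.val : {x // x ∈ s} → ι)) *
        (Bm.submatrix (Subtype.val : {x // x ∈ s} → ι) id)).det := by
  have step1 : (A * Bm).det
      = ∑ f : κ → ι, (∏ i, Bm (f i) i) * (A.submatrix id f).det := by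
    rw [det_apply']
    simp only [Matrix.mul_apply, prod_univ_sum, Fintype.piFinset_univ, Finset.mul_sum]
    rw [Finset.sum_comm]
    refine Finset.sum_congr rfl fun f _ => ?_
    rw [det_apply', Finset.mul_sum]
    refine Finset.sum_congr rfl fun σ _ => ?_
    rw [prod_mul_distrib]
    simp only [submatrix_apply, id_eq]
    ring
  rw [step1]
  have step2 : ∑ f : κ → ι, (∏ i, Bm (f i) i) * (A.submatrix id f).det
      = ∑ f ∈ univ.filter (fun f : κ → ι => Function.Injective f),
          (∏ i, Bm (f i) i) * (A.submatrix id f).det := by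
    refine (Finset.sum_subset (filter_subset _ _) fun f _ hf => ?_).symm
    simp only [mem_filter, mem_univ, true_and] at hf
    rw [Function.Injective] at hf
    push_neg at hf
    obtain ⟨i, j, hij, hne⟩ := hf
    have : (A.submatrix id f).det = 0 :=
      det_zero_of_column_eq hne (fun k => by simp [submatrix_apply, hij])
    rw [this, mul_zero]
  rw [step2]
  have hmaps : ∀ f ∈ univ.filter (fun f : κ → ι => Function.Injective f),
      univ.image f ∈ (univ : Finset ι).powersetCard (Fintype.card κ) := by
    intro f hf
    simp only [mem_filter, mem_univ, true_and] at hf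
    simp only [mem_powersetCard]
    exact ⟨subset_univ _, by rw [Finset.card_image_of_injective _ hf, card_univ]⟩
  rw [← Finset.sum_fiberwise_of_maps_to hmaps]
  refine Finset.sum_congr rfl fun s hs => ?_
  have hcard : s.card = Fintype.card κ := (mem_powersetCard.mp hs).2
  let e : κ ≃ {x // x ∈ s} :=
    Fintype.equivOfCardEq (by rw [Fintype.card_coe, hcard])
  have key : (A.submatrix id (Subtype.val : {x // x ∈ s} → ι)) *
        (Bm.submatrix (Subtype.val : {x // x ∈ s} → ι) id)
      = (A.submatrix id (Subtype.val : {x // x ∈ s} → ι)).submatrix id e *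
        (Bm.submatrix (Subtype.val : {x // x ∈ s} → ι) id).submatrix e id := by
    rw [submatrix_mul_equiv]
    simp
  rw [key, det_mul]
  set As := (A.submatrix id (Subtype.val : {x // x ∈ s} → ι)).submatrix id e with hAs
  set Bs := (Bm.submatrix (Subtype.val : {x // x ∈ s} → ι) id).submatrix e id with hBs
  rw [det_apply' (M := Bs), Finset.mul_sum]
  refine (Finset.sum_bij (fun (τ : Perm κ) _ => fun i => ((e (τ i)) : ι)) ?_ ?_ ?_ ?_).symm
  · intro τ _
    simp only [mem_filter, mem_univ, true_and]
    constructor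
    · exact Subtype.val_injective.comp (e.injective.comp τ.injective)
    · apply Finset.ext
      intro x
      simp only [mem_image, mem_univ, true_and]
      constructor
      · rintro ⟨i, rfl⟩; exact (e (τ i)).2
      · intro hx
        exact ⟨τ.symm (e.symm ⟨x, hx⟩), by simp⟩
  · intro τ₁ _ τ₂ _ h
    ext i
    have h1 : ((e (τ₁ i)) : ι) = ((e (τ₂ i)) : ι) := congrFun h i
    have h2 : e (τ₁ i) = e (τ₂ i) := Subtype.val_injective h1
    exact e.injective h2
  · intro f hf
    simp only [mem_filter, mem_univ, true_and] at hf
    obtain ⟨hinj, himg⟩ := hf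
    have hmem : ∀ i, f i ∈ s := by
      intro i; rw [← himg]; exact mem_image_of_mem f (mem_univ i)
    have hg : Function.Injective (fun i => e.symm ⟨f i, hmem i⟩) := by
      intro a b hab
      apply hinj
      exact congrArg Subtype.val (e.symm.injective hab)
    refine ⟨Equiv.ofBijective _ (Finite.injective_iff_bijective.mp hg), mem_univ _, ?_⟩
    funext i
    simp [Equiv.ofBijective]
  · intro τ _
    have heq : (A.submatrix id fun i => ((e (τ i)) : ι)) = As.submatrix id τ := by
      ext i j; simp [hAs, submatrix_apply]
    rw [heq, det_permute']
    simp only [hBs, submatrix_apply, id_eq]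
    ring
open Matrix Finset Function

variable {R : Type*} [CommRing R] {κ : Type*} [Fintype κ] [DecidableEq κ]

theorem det_piecewise_one (H : Matrix κ κ R) (s : Finset κ) :
    (Matrix.of (s.piecewise (1 : Matrix κ κ R) H)).det
      = (H.submatrix (Subtype.val : {x // x ∉ s} → κ) Subtype.val).det := by
  classical
  let e : {x // x ∈ s} ⊕ {x // x ∉ s} ≃ κ := Equiv.sumCompl (· ∈ s)
  rw [← det_submatrix_equiv_self e]
  have hblock : (Matrix.of (s.piecewise (1 : Matrix κ κ R) H)).submatrix e e
      = Matrix.fromBlocks 1 0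
          (H.submatrix (Subtype.val : {x // x ∉ s} → κ) (Subtype.val : {x // x ∈ s} → κ))
          (H.submatrix (Subtype.val : {x // x ∉ s} → κ) Subtype.val) := by
    ext i j
    cases' i with a a <;> cases' j with b b <;>
      simp only [submatrix_apply, Matrix.of_apply, Finset.piecewise,
        Equiv.sumCompl_apply_inl, Equiv.sumCompl_apply_inr, e, fromBlocks_apply₁₁,
        fromBlocks_apply₁₂, fromBlocks_apply₂₁, fromBlocks_apply₂₂]
    · rw [if_pos a.2]
      simp [Matrix.one_apply]
    · rw [if_pos a.2]
      have : (a : κ) ≠ (b : κ) := fun h => b.2 (h ▸ a.2)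
      simp [Matrix.one_apply_ne this]
    · rw [if_neg a.2]
    · rw [if_neg a.2]
  rw [hblock, det_fromBlocks_zero₁₂, det_one, one_mul]

theorem det_smul_one_add (c : R) (H : Matrix κ κ R) :
    (c • (1 : Matrix κ κ R) + H).det
      = ∑ u : Finset κ, c ^ (Fintype.card κ - u.card) *
          (H.submatrix (Subtype.val : {x // x ∈ u} → κ) Subtype.val).det := by
  classical
  have h0 : (c • (1 : Matrix κ κ R) + H).det
      = ∑ s : Finset κ, c ^ s.card *
          (H.submatrix (Subtype.val : {x // x ∉ s} → κ) Subtype.val).det := by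
    have hadd : (c • (1 : Matrix κ κ R) + H).det
        = ∑ s : Finset κ, (detRowAlternating (s.piecewise (c • (1 : Matrix κ κ R)) H) : R) :=
      MultilinearMap.map_add_univ (detRowAlternating (R := R) (n := κ)).toMultilinearMap
        (c • (1 : Matrix κ κ R)) H
    rw [hadd]
    refine Finset.sum_congr rfl fun s _ => ?_
    have hpw : s.piecewise (c • (1 : Matrix κ κ R)) H
        = s.piecewise (fun i => c • (s.piecewise (1 : Matrix κ κ R) H) i)
            (s.piecewise (1 : Matrix κ κ R) H) := by
      funext i j
      by_cases hi : i ∈ s <;> simp [Finset.piecewise, hi, Matrix.smul_apply]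
    have h2 : (Matrix.of (s.piecewise (fun i => (fun _ : κ => c) i •
          (s.piecewise (1 : Matrix κ κ R) H) i) (s.piecewise (1 : Matrix κ κ R) H))).det
        = (∏ _i ∈ s, c) • (Matrix.of (s.piecewise (1 : Matrix κ κ R) H)).det :=
      MultilinearMap.map_piecewise_smul
        (detRowAlternating (R := R) (n := κ)).toMultilinearMap _ _ s
    have h3 : (detRowAlternating (s.piecewise (c • (1 : Matrix κ κ R)) H) : R)
        = (Matrix.of (s.piecewise (fun i => (fun _ : κ => c) i •
          (s.piecewise (1 : Matrix κ κ R) H) i) (s.piecewise (1 : Matrix κ κ R) H))).det := by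
      rw [show (Matrix.of (s.piecewise (fun i => (fun _ : κ => c) i •
          (s.piecewise (1 : Matrix κ κ R) H) i) (s.piecewise (1 : Matrix κ κ R) H)))
        = Matrix.of (s.piecewise (c • (1 : Matrix κ κ R)) H) from by
          apply congrArg; exact hpw.symm]
      rfl
    rw [h3, h2, Finset.prod_const, det_piecewise_one H s]
    simp [smul_eq_mul]
  rw [h0]
  refine Finset.sum_nbij' (fun s => sᶜ) (fun u => uᶜ) (fun s _ => Finset.mem_univ _)
    (fun u _ => Finset.mem_univ _) (fun s _ => compl_compl s) (fun u _ => compl_compl u) ?_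
  intro s _
  have hcard : Fintype.card κ - sᶜ.card = s.card := by
    rw [Finset.card_compl, Nat.sub_sub_self (Finset.card_le_univ s)]
  rw [hcard]
  congr 1
  let es : {x // x ∉ s} ≃ {x // x ∈ sᶜ} :=
    Equiv.subtypeEquivRight (fun x => (Finset.mem_compl).symm)
  rw [← det_submatrix_equiv_self es (H.submatrix Subtype.val Subtype.val),
    submatrix_submatrix]
  congr 1
variable {R : Type*} [CommRing R]

theorem det_mul_comm_of_equiv {a b : Type*} [Fintype a] [Fintype b] [DecidableEq a]
    [DecidableEq b] (e : a ≃ b) (P : Matrix a b R) (Q : Matrix b a R) :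
    (P * Q).det = (Q * P).det := by
  have h1 : P.submatrix (⇑e.symm) id * Q.submatrix id (⇑e.symm)
      = (P * Q).submatrix (⇑e.symm) (⇑e.symm) := by
    have := submatrix_mul_equiv P Q (⇑e.symm) (Equiv.refl b) (⇑e.symm)
    simpa using this
  have h2 : Q.submatrix id (⇑e.symm) * P.submatrix (⇑e.symm) id = Q * P := by
    have := submatrix_mul_equiv Q P id e.symm id
    simpa using this
  calc (P * Q).det = ((P * Q).submatrix (⇑e.symm) (⇑e.symm)).det :=
        (det_submatrix_equiv_self e.symm _).symm
    _ = (P.submatrix (⇑e.symm) id).det * (Q.submatrix id (⇑e.symm)).det := by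
        rw [← h1, det_mul]
    _ = (Q.submatrix id (⇑e.symm) * P.submatrix (⇑e.symm) id).det := by
        rw [det_mul, mul_comm]
    _ = (Q * P).det := by rw [h2]

theorem card_supersets {α : Type*} [Fintype α] [DecidableEq α] (t : Finset α) (k : ℕ)
    (h : t.card ≤ k) :
    ((univ.powersetCard k).filter (fun s => t ⊆ s)).card
      = (Fintype.card α - t.card).choose (k - t.card) := by
  rw [show (Fintype.card α - t.card).choose (k - t.card)
      = ((tᶜ : Finset α).powersetCard (k - t.card)).card from by
    rw [Finset.card_powersetCard, Finset.card_compl]]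
  apply Finset.card_bij' (fun s _ => s \ t) (fun w _ => w ∪ t)
  · intro s hs
    simp only [mem_filter, mem_powersetCard] at hs
    obtain ⟨⟨-, hcard⟩, hts⟩ := hs
    simp only [mem_powersetCard]
    constructor
    · intro x hx
      simp only [Finset.mem_compl]
      exact (Finset.mem_sdiff.mp hx).2
    · rw [Finset.card_sdiff_of_subset hts, hcard]
  · intro w hw
    simp only [mem_powersetCard] at hw
    obtain ⟨hwc, hwcard⟩ := hw
    have hdisj : Disjoint w t := by
      rw [Finset.disjoint_left]
      intro x hx
      exact Finset.mem_compl.mp (hwc hx)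
    simp only [mem_filter, mem_powersetCard]
    refine ⟨⟨subset_univ _, ?_⟩, Finset.subset_union_right⟩
    rw [Finset.card_union_of_disjoint hdisj, hwcard, Nat.sub_add_cancel h]
  · intro s hs
    simp only [mem_filter, mem_powersetCard] at hs
    exact Finset.sdiff_union_of_subset hs.2
  · intro w hw
    simp only [mem_powersetCard] at hw
    have hdisj : Disjoint w t := by
      rw [Finset.disjoint_left]
      intro x hx
      exact Finset.mem_compl.mp (hw.1 hx)
    exact Finset.union_sdiff_cancel_right hdisj

open Matrix Finset

theorem gram_sum {m n : ℕ} (B : Matrix (Fin m) (Fin n) ℂ) (hB : B * Bᴴ = 1) (j : ℕ) :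
    ∑ t ∈ (univ : Finset (Fin n)).powersetCard j,
      ((colSubmatrix B t)ᴴ * colSubmatrix B t).det = (m.choose j : ℂ) := by
  have stepA : ∀ t ∈ (univ : Finset (Fin n)).powersetCard j,
      ((colSubmatrix B t)ᴴ * colSubmatrix B t).det
        = ∑ r ∈ (univ : Finset (Fin m)).powersetCard j,
            (((colSubmatrix B t)ᴴ.submatrix id (Subtype.val : {y // y ∈ r} → Fin m)) *
              ((colSubmatrix B t).submatrix (Subtype.val : {y // y ∈ r} → Fin m) id)).det := by
    intro t ht
    have hcard : Fintype.card {x // x ∈ t} = j := by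
      rw [Fintype.card_coe, (mem_powersetCard.mp ht).2]
    rw [cauchyBinet, hcard]
  rw [Finset.sum_congr rfl stepA, Finset.sum_comm]
  have inner : ∀ r ∈ (univ : Finset (Fin m)).powersetCard j,
      ∑ t ∈ (univ : Finset (Fin n)).powersetCard j,
        (((colSubmatrix B t)ᴴ.submatrix id (Subtype.val : {y // y ∈ r} → Fin m)) *
          ((colSubmatrix B t).submatrix (Subtype.val : {y // y ∈ r} → Fin m) id)).det
        = 1 := by
    intro r hr
    have hrcard : Fintype.card {y // y ∈ r} = j := by
      rw [Fintype.card_coe, (mem_powersetCard.mp hr).2]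
    set A' : Matrix {y // y ∈ r} (Fin n) ℂ := B.submatrix Subtype.val id with hA'
    set Bm' : Matrix (Fin n) {y // y ∈ r} ℂ := Bᴴ.submatrix id Subtype.val with hBm'
    have hAB : A' * Bm' = 1 := by
      have : A' * Bm' = (B * Bᴴ).submatrix Subtype.val Subtype.val := by
        ext i l
        simp [hA', hBm', Matrix.mul_apply]
      rw [this, hB, Matrix.submatrix_one _ Subtype.val_injective]
    have hcb := cauchyBinet A' Bm'
    rw [hAB, det_one, hrcard] at hcb
    refine Eq.trans (Finset.sum_congr rfl fun t ht => ?_) hcb.symm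
    have htcard : Fintype.card {x // x ∈ t} = j := by
      rw [Fintype.card_coe, (mem_powersetCard.mp ht).2]
    have e : {x // x ∈ t} ≃ {y // y ∈ r} :=
      Fintype.equivOfCardEq (by rw [htcard, hrcard])
    have hP : A'.submatrix id (Subtype.val : {x // x ∈ t} → Fin n)
        = (colSubmatrix B t).submatrix (Subtype.val : {y // y ∈ r} → Fin m) id := by
      ext y x; simp [hA', colSubmatrix]
    have hQ : Bm'.submatrix (Subtype.val : {x // x ∈ t} → Fin n) id
        = (colSubmatrix B t)ᴴ.submatrix id (Subtype.val : {y // y ∈ r} → Fin m) := by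
      ext x y; simp [hBm', colSubmatrix, conjTranspose_apply]
    rw [det_mul_comm_of_equiv e, hP, hQ]
  rw [Finset.sum_congr rfl inner, Finset.sum_const, Finset.card_powersetCard, card_univ,
    Fintype.card_fin]
  simp

theorem main_identity {m n k : ℕ} (hkm : k ≤ m) (B : Matrix (Fin m) (Fin n) ℂ)
    (hB : B * Bᴴ = 1) (c : ℂ) :
    ∑ s ∈ (univ : Finset (Fin n)).powersetCard k,
        (c • 1 + (colSubmatrix B s)ᴴ * colSubmatrix B s).det
      = ∑ j ∈ Finset.range (k + 1),
          c ^ (k - j) * ((n - j).choose (k - j) : ℂ) * (m.choose j : ℂ) := by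
  classical
  have step1 : ∀ s ∈ (univ : Finset (Fin n)).powersetCard k,
      (c • 1 + (colSubmatrix B s)ᴴ * colSubmatrix B s).det
        = ∑ t ∈ s.powerset, c ^ (k - t.card) *
            ((colSubmatrix B t)ᴴ * colSubmatrix B t).det := by
    intro s hs
    have hscard : s.card = k := (mem_powersetCard.mp hs).2
    rw [det_smul_one_add]
    refine Finset.sum_nbij' (fun u => u.map (Function.Embedding.subtype (· ∈ s)))
      (fun t => t.subtype (· ∈ s)) ?_ ?_ ?_ ?_ ?_
    · intro u _
      simp only [Finset.mem_powerset]
      intro x hx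
      obtain ⟨a, _, hax⟩ := Finset.mem_map.mp hx
      have : (a : Fin n) = x := hax
      exact this ▸ a.2
    · intro t _; exact Finset.mem_univ _
    · intro u _
      ext y
      simp only [Finset.mem_subtype, Finset.mem_map, Function.Embedding.coe_subtype]
      constructor
      · rintro ⟨a, ha, hay⟩
        exact (Subtype.ext hay : a = y) ▸ ha
      · intro hy; exact ⟨y, hy, rfl⟩
    · intro t ht
      rw [Finset.subtype_map]
      exact Finset.filter_true_of_mem (fun x hx => Finset.mem_powerset.mp ht hx)
    · intro u _
      set t := u.map (Function.Embedding.subtype (· ∈ s)) with htdef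
      have hts : ∀ x ∈ t, x ∈ s := by
        intro x hx
        obtain ⟨a, _, hax⟩ := Finset.mem_map.mp hx
        have : (a : Fin n) = x := hax
        exact this ▸ a.2
      have hcards : Fintype.card {x // x ∈ s} = k := by rw [Fintype.card_coe, hscard]
      have hcardt : t.card = u.card := Finset.card_map _
      let ev : {x : Fin n // x ∈ t} ≃ {y : {x : Fin n // x ∈ s} // y ∈ u} :=
        { toFun := fun x => ⟨⟨x.1, hts x.1 x.2⟩, by
            obtain ⟨a, ha, hax⟩ := Finset.mem_map.mp x.2
            have hval : (a : Fin n) = x.1 := hax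
            have : (⟨x.1, hts x.1 x.2⟩ : {x // x ∈ s}) = a := Subtype.ext hval.symm
            rw [this]; exact ha⟩
          invFun := fun y => ⟨y.1.1, by
            have := Finset.mem_map_of_mem (Function.Embedding.subtype (· ∈ s)) y.2
            exact this⟩
          left_inv := fun x => Subtype.ext rfl
          right_inv := fun y => Subtype.ext (Subtype.ext rfl) }
      have hdet : (((colSubmatrix B s)ᴴ * colSubmatrix B s).submatrix
            (Subtype.val : {y // y ∈ u} → {x // x ∈ s}) Subtype.val).det
          = ((colSubmatrix B t)ᴴ * colSubmatrix B t).det := by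
        rw [← det_submatrix_equiv_self ev
          (((colSubmatrix B s)ᴴ * colSubmatrix B s).submatrix Subtype.val Subtype.val)]
        congr 1
      rw [hcards, hcardt, hdet]
  rw [Finset.sum_congr rfl step1]
  have step2 : ∀ s ∈ (univ : Finset (Fin n)).powersetCard k,
      ∑ t ∈ s.powerset, c ^ (k - t.card) * ((colSubmatrix B t)ᴴ * colSubmatrix B t).det
        = ∑ j ∈ Finset.range (k + 1), ∑ t ∈ s.powersetCard j,
            c ^ (k - j) * ((colSubmatrix B t)ᴴ * colSubmatrix B t).det := by
    intro s hs
    have hscard : s.card = k := (mem_powersetCard.mp hs).2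
    rw [Finset.sum_powerset, hscard]
    refine Finset.sum_congr rfl fun j _ => Finset.sum_congr rfl fun t ht => ?_
    rw [(mem_powersetCard.mp ht).2]
  rw [Finset.sum_congr rfl step2, Finset.sum_comm]
  refine Finset.sum_congr rfl fun j hj => ?_
  have hjk : j ≤ k := Nat.lt_succ_iff.mp (Finset.mem_range.mp hj)
  have hrw : ∀ s : Finset (Fin n), s.powersetCard j
      = ((univ : Finset (Fin n)).powersetCard j).filter (fun t => t ⊆ s) := by
    intro s
    ext t
    simp only [mem_powersetCard, mem_filter, subset_univ, true_and]
    tauto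
  calc ∑ s ∈ (univ : Finset (Fin n)).powersetCard k, ∑ t ∈ s.powersetCard j,
        c ^ (k - j) * ((colSubmatrix B t)ᴴ * colSubmatrix B t).det
      = ∑ t ∈ (univ : Finset (Fin n)).powersetCard j,
          (((univ : Finset (Fin n)).powersetCard k).filter (fun s => t ⊆ s)).card •
            (c ^ (k - j) * ((colSubmatrix B t)ᴴ * colSubmatrix B t).det) := by
        rw [Finset.sum_congr rfl (fun s _ => by
          rw [hrw s, Finset.sum_filter] :
          ∀ s ∈ (univ : Finset (Fin n)).powersetCard k, ∑ t ∈ s.powersetCard j,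
              c ^ (k - j) * ((colSubmatrix B t)ᴴ * colSubmatrix B t).det
            = ∑ t ∈ (univ : Finset (Fin n)).powersetCard j,
                if t ⊆ s then c ^ (k - j) * ((colSubmatrix B t)ᴴ * colSubmatrix B t).det
                else 0)]
        rw [Finset.sum_comm]
        refine Finset.sum_congr rfl fun t _ => ?_
        rw [← Finset.sum_filter, Finset.sum_const]
    _ = ∑ t ∈ (univ : Finset (Fin n)).powersetCard j,
          ((n - j).choose (k - j) : ℂ) *
            (c ^ (k - j) * ((colSubmatrix B t)ᴴ * colSubmatrix B t).det) := by
        refine Finset.sum_congr rfl fun t ht => ?_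
        have htc : t.card = j := (mem_powersetCard.mp ht).2
        rw [card_supersets t k (by rw [htc]; exact hjk), htc, Fintype.card_fin, nsmul_eq_mul]
    _ = c ^ (k - j) * ((n - j).choose (k - j) : ℂ) * (m.choose j : ℂ) := by
        rw [← Finset.mul_sum, ← Finset.mul_sum, gram_sum B hB j]
        ring


end Helpers

/-- For `n ≥ m ≥ k ≥ 1` and an `m × n` complex matrix `B` with
`B Bᴴ = I`, for every `ε > 0` the sum over all `k`-element column subsets `s` of
`det (ε • I + Bₛᴴ Bₛ)` (a positive real number for each `s`) is at least `C(m,k)` and at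
most `C(m,k) (1 + √ε)^(n+k)`. -/
theorem sum_det_eps_add_conjTranspose_mul_submatrix_bounds
    (n m k : ℕ) (hk : 1 ≤ k) (hkm : k ≤ m) (hmn : m ≤ n)
    (B : Matrix (Fin m) (Fin n) ℂ) (hB : B * Bᴴ = 1)
    (ε : ℝ) (hε : 0 < ε) :
    (m.choose k : ℝ) ≤
        (∑ s ∈ Finset.univ.powersetCard k,
          ((ε : ℂ) • 1 + (colSubmatrix B s)ᴴ * colSubmatrix B s).det).re ∧
      (∑ s ∈ Finset.univ.powersetCard k,
          ((ε : ℂ) • 1 + (colSubmatrix B s)ᴴ * colSubmatrix B s).det).re ≤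
        (m.choose k : ℝ) * (1 + Real.sqrt ε) ^ (n + k) := by
  have hid := main_identity hkm B hB (ε : ℂ)
  set T : ℝ := ∑ j ∈ Finset.range (k + 1),
      ε ^ (k - j) * ((n - j).choose (k - j) : ℝ) * (m.choose j : ℝ) with hT
  have hcast : ∑ j ∈ Finset.range (k + 1),
      (ε : ℂ) ^ (k - j) * ((n - j).choose (k - j) : ℂ) * (m.choose j : ℂ) = (T : ℂ) := by
    rw [hT]
    push_cast
    rfl
  have hre : (∑ s ∈ Finset.univ.powersetCard k,
      ((ε : ℂ) • 1 + (colSubmatrix B s)ᴴ * colSubmatrix B s).det).re = T := by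
    rw [hid, hcast, Complex.ofReal_re]
  rw [hre]
  constructor
  · -- lower bound
    have hterm : (m.choose k : ℝ)
        = ε ^ (k - k) * ((n - k).choose (k - k) : ℝ) * (m.choose k : ℝ) := by simp
    rw [hT, hterm]
    refine Finset.single_le_sum (f := fun j => ε ^ (k - j) * ((n - j).choose (k - j) : ℝ) *
      (m.choose j : ℝ)) (fun j _ => by positivity) (Finset.self_mem_range_succ k)
  · -- upper bound
    have hstep : ∀ j ∈ Finset.range (k + 1),
        ε ^ (k - j) * ((n - j).choose (k - j) : ℝ) * (m.choose j : ℝ)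
          ≤ (m.choose k : ℝ) *
            (((n + k).choose (2 * (k - j)) : ℝ) * Real.sqrt ε ^ (2 * (k - j))) := by
      intro j hj
      have hjk : j ≤ k := Nat.lt_succ_iff.mp (Finset.mem_range.mp hj)
      have h1 : m.choose j ≤ m.choose k * k.choose j := by
        have hmul : m.choose k * k.choose j = m.choose j * (m - j).choose (k - j) :=
          Nat.choose_mul (n := m) hjk
        have hpos : 1 ≤ (m - j).choose (k - j) :=
          Nat.choose_pos (Nat.sub_le_sub_right hkm j)
        calc m.choose j = m.choose j * 1 := (mul_one _).symm
          _ ≤ m.choose j * (m - j).choose (k - j) := Nat.mul_le_mul_left _ hpos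
          _ = m.choose k * k.choose j := hmul.symm
      have h2 : (n - j).choose (k - j) ≤ n.choose (k - j) :=
        Nat.choose_le_choose _ (Nat.sub_le n j)
      have h3 : k.choose j * n.choose (k - j) ≤ (n + k).choose (2 * (k - j)) := by
        have hsymm : k.choose j = k.choose (k - j) := (Nat.choose_symm hjk).symm
        rw [hsymm, Nat.add_comm n k, Nat.add_choose_eq]
        have hmem : ((k - j), (k - j)) ∈ Finset.HasAntidiagonal.antidiagonal (2 * (k - j)) := by
          rw [Finset.HasAntidiagonal.mem_antidiagonal, two_mul]
        exact Finset.single_le_sum (f := fun ij => k.choose ij.1 * n.choose ij.2)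
          (fun ij _ => Nat.zero_le _) hmem
      have hnat : (n - j).choose (k - j) * m.choose j
          ≤ m.choose k * (n + k).choose (2 * (k - j)) := by
        calc (n - j).choose (k - j) * m.choose j
            ≤ n.choose (k - j) * (m.choose k * k.choose j) :=
              Nat.mul_le_mul h2 h1
          _ = m.choose k * (k.choose j * n.choose (k - j)) := by ring
          _ ≤ m.choose k * (n + k).choose (2 * (k - j)) :=
              Nat.mul_le_mul_left _ h3
      have heps : ε ^ (k - j) = Real.sqrt ε ^ (2 * (k - j)) := by
        rw [pow_mul, Real.sq_sqrt hε.le]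
      calc ε ^ (k - j) * ((n - j).choose (k - j) : ℝ) * (m.choose j : ℝ)
          = (((n - j).choose (k - j) * m.choose j : ℕ) : ℝ) * ε ^ (k - j) := by
            push_cast; ring
        _ ≤ ((m.choose k * (n + k).choose (2 * (k - j)) : ℕ) : ℝ) * ε ^ (k - j) := by
            exact mul_le_mul_of_nonneg_right (by exact_mod_cast hnat) (by positivity)
        _ = (m.choose k : ℝ) *
            (((n + k).choose (2 * (k - j)) : ℝ) * Real.sqrt ε ^ (2 * (k - j))) := by
            rw [heps]; push_cast; ring
    have hsum2 : ∑ j ∈ Finset.range (k + 1),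
        ((n + k).choose (2 * (k - j)) : ℝ) * Real.sqrt ε ^ (2 * (k - j))
          ≤ (1 + Real.sqrt ε) ^ (n + k) := by
      have hinj : Set.InjOn (fun j => 2 * (k - j)) (Finset.range (k + 1)) := by
        intro a ha b hb hab
        simp only [Finset.coe_range, Set.mem_Iio] at ha hb
        simp only at hab
        omega
      have himg : ∑ j ∈ Finset.range (k + 1),
          ((n + k).choose (2 * (k - j)) : ℝ) * Real.sqrt ε ^ (2 * (k - j))
            = ∑ r ∈ (Finset.range (k + 1)).image (fun j => 2 * (k - j)),
                ((n + k).choose r : ℝ) * Real.sqrt ε ^ r :=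
        (Finset.sum_image (f := fun r => ((n + k).choose r : ℝ) * Real.sqrt ε ^ r)
          (g := fun j => 2 * (k - j)) (fun a ha b hb hab => hinj ha hb hab)).symm
      rw [himg]
      have hsubset : (Finset.range (k + 1)).image (fun j => 2 * (k - j))
          ⊆ Finset.range (n + k + 1) := by
        intro r hr
        obtain ⟨j, hj, rfl⟩ := Finset.mem_image.mp hr
        have hjk : j ≤ k := Nat.lt_succ_iff.mp (Finset.mem_range.mp hj)
        have : k - j ≤ k := Nat.sub_le k j
        rw [Finset.mem_range]
        omega
      calc ∑ r ∈ (Finset.range (k + 1)).image (fun j => 2 * (k - j)),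
            ((n + k).choose r : ℝ) * Real.sqrt ε ^ r
          ≤ ∑ r ∈ Finset.range (n + k + 1), ((n + k).choose r : ℝ) * Real.sqrt ε ^ r :=
            Finset.sum_le_sum_of_subset_of_nonneg hsubset
              (fun r _ _ => by positivity)
        _ = (1 + Real.sqrt ε) ^ (n + k) := by
            rw [add_comm (1 : ℝ), add_pow]
            refine Finset.sum_congr rfl fun r _ => ?_
            rw [one_pow]
            ring
    calc T ≤ ∑ j ∈ Finset.range (k + 1), (m.choose k : ℝ) *
          (((n + k).choose (2 * (k - j)) : ℝ) * Real.sqrt ε ^ (2 * (k - j))) :=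
          Finset.sum_le_sum hstep
      _ = (m.choose k : ℝ) * ∑ j ∈ Finset.range (k + 1),
          (((n + k).choose (2 * (k - j)) : ℝ) * Real.sqrt ε ^ (2 * (k - j))) :=
          (Finset.mul_sum _ _ _).symm
      _ ≤ (m.choose k : ℝ) * (1 + Real.sqrt ε) ^ (n + k) := by
          have h0 : (0 : ℝ) ≤ (m.choose k : ℝ) := Nat.cast_nonneg _
          exact mul_le_mul_of_nonneg_left hsum2 h0
end

section
/- Let m ≤ n be positive integers and let A be an m×n random matrix whose entries are jointly independent real random variables with mean zero and variance one. Then E[ det((1/n)·A Aᵀ) ] = (m!/n^m)·C(n,m). -/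
open Matrix Finset MeasureTheory ProbabilityTheory

lemma aux_indep_prod {Ω ι : Type*} [MeasureSpace Ω] [IsProbabilityMeasure (ℙ : Measure Ω)]
    (Z : ι → Ω → ℝ) (hZm : ∀ q, Measurable (Z q)) (hZi : ∀ q, Integrable (Z q) ℙ)
    (hind : iIndepFun Z ℙ) (S : Finset ι) :
    Integrable (fun ω => ∏ q ∈ S, Z q ω) ℙ ∧
      ∫ ω, ∏ q ∈ S, Z q ω ∂ℙ = ∏ q ∈ S, ∫ ω, Z q ω ∂ℙ := by
  classical
  induction S using Finset.induction_on with
  | empty => simp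
  | @insert a S ha ih =>
    have hprod : (fun ω => ∏ q ∈ S, Z q ω) = ∏ q ∈ S, Z q := by
      funext ω; simp
    have hIF : IndepFun (Z a) (fun ω => ∏ q ∈ S, Z q ω) ℙ := by
      rw [hprod]
      exact (hind.indepFun_finsetProd_of_notMem hZm ha).symm
    have h1 : Integrable (fun ω => Z a ω * ∏ q ∈ S, Z q ω) ℙ := by
      have := hIF.integrable_mul (hZi a) ih.1
      exact this
    constructor
    · simpa [Finset.prod_insert ha] using h1
    · simp only [Finset.prod_insert ha]
      have := hIF.integral_mul_eq_mul_integral (hZi a).aestronglyMeasurable ih.1.aestronglyMeasurable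
      simpa [ih.2] using this

lemma aux_monomial {m n : ℕ} {Ω : Type} [MeasureSpace Ω] [IsProbabilityMeasure (ℙ : Measure Ω)]
    (A : Ω → Matrix (Fin m) (Fin n) ℝ)
    (hmeas : ∀ i j, Measurable fun ω => A ω i j)
    (hL2 : ∀ i j, MemLp (fun ω => A ω i j) 2 ℙ)
    (hindep : iIndepFun
      (fun (q : Fin m × Fin n) ω => A ω q.1 q.2) ℙ)
    (hmean : ∀ i j, ∫ ω, A ω i j ∂ℙ = 0)
    (hvar : ∀ i j, variance (fun ω => A ω i j) ℙ = 1)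
    (a b : Fin m → Fin n) :
    Integrable (fun ω => ∏ i, A ω i (a i) * A ω i (b i)) ℙ ∧
      ∫ ω, ∏ i, A ω i (a i) * A ω i (b i) ∂ℙ = if a = b then 1 else 0 := by
  classical
  set e : Fin m × Fin n → ℕ :=
    fun q => (if a q.1 = q.2 then 1 else 0) + (if b q.1 = q.2 then 1 else 0) with he
  set Z : Fin m × Fin n → Ω → ℝ := fun q ω => (A ω q.1 q.2) ^ e q with hZ
  have h1 : ∀ (ω : Ω) (c : Fin m → Fin n),
      (∏ q : Fin m × Fin n, (A ω q.1 q.2) ^ (if c q.1 = q.2 then 1 else 0))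
        = ∏ i, A ω i (c i) := by
    intro ω c
    rw [Fintype.prod_prod_type]
    refine Finset.prod_congr rfl fun i _ => ?_
    simp [pow_ite]
  have key : ∀ ω, ∏ i, A ω i (a i) * A ω i (b i) = ∏ q : Fin m × Fin n, Z q ω := by
    intro ω
    calc ∏ i, A ω i (a i) * A ω i (b i)
        = (∏ i, A ω i (a i)) * ∏ i, A ω i (b i) := Finset.prod_mul_distrib
      _ = (∏ q : Fin m × Fin n, A ω q.1 q.2 ^ (if a q.1 = q.2 then 1 else 0)) *
          ∏ q : Fin m × Fin n, A ω q.1 q.2 ^ (if b q.1 = q.2 then 1 else 0) := by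
            rw [h1 ω a, h1 ω b]
      _ = ∏ q : Fin m × Fin n, Z q ω := by
            rw [← Finset.prod_mul_distrib]
            exact Finset.prod_congr rfl fun q _ => (pow_add _ _ _).symm
  have hZm : ∀ q, Measurable (Z q) := fun q => (hmeas q.1 q.2).pow_const (e q)
  have hZi : ∀ q, Integrable (Z q) ℙ := by
    intro q
    have h2 := hL2 q.1 q.2
    by_cases ha : a q.1 = q.2 <;> by_cases hb : b q.1 = q.2 <;>
      simp only [hZ, he, ha, hb, if_true, if_false]
    · simpa using h2.integrable_sq
    · simpa using h2.integrable one_le_two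
    · simpa using h2.integrable one_le_two
    · simpa using integrable_const (1 : ℝ)
  have hindZ : iIndepFun Z ℙ := by
    have := hindep.comp (fun q (x : ℝ) => x ^ e q) (fun q => measurable_id.pow_const (e q))
    exact this
  have hsq : ∀ (i : Fin m) (j : Fin n), ∫ ω, (A ω i j) ^ 2 ∂ℙ = 1 := by
    intro i j
    have hv' := variance_eq_sub (hL2 i j)
    rw [hvar i j, hmean i j] at hv'
    simp only [Pi.pow_apply] at hv'
    linarith
  have hZval : ∀ q, ∫ ω, Z q ω ∂ℙ = if e q = 1 then 0 else 1 := by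
    intro q
    by_cases ha : a q.1 = q.2 <;> by_cases hb : b q.1 = q.2 <;>
      simp only [hZ, he, ha, hb, if_true, if_false]
    · simpa using hsq q.1 q.2
    · simpa using hmean q.1 q.2
    · simpa using hmean q.1 q.2
    · simp
  obtain ⟨hint, hval⟩ := aux_indep_prod Z hZm hZi hindZ Finset.univ
  constructor
  · have : (fun ω => ∏ i, A ω i (a i) * A ω i (b i)) = fun ω => ∏ q, Z q ω := funext key
    rw [this]; exact hint
  · rw [show (∫ ω, ∏ i, A ω i (a i) * A ω i (b i) ∂ℙ) = ∫ ω, ∏ q, Z q ω ∂ℙ from by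
      congr 1; exact funext key]
    rw [hval, Finset.prod_congr rfl fun q _ => hZval q]
    by_cases hab : a = b
    · subst hab
      rw [if_pos rfl]
      refine Finset.prod_eq_one fun q _ => ?_
      rw [if_neg]
      simp only [he]
      split_ifs <;> simp
    · rw [if_neg hab]
      obtain ⟨i, hi⟩ : ∃ i, a i ≠ b i := by
        by_contra h; push_neg at h; exact hab (funext h)
      refine Finset.prod_eq_zero (Finset.mem_univ (i, a i)) ?_
      rw [if_pos]
      simp [he, Ne.symm hi]
lemma aux_sign_sum {m n : ℕ} (f : Fin m → Fin n) (hf : ¬ Function.Injective f) :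
    ∑ σ ∈ Finset.univ.filter (fun σ : Equiv.Perm (Fin m) => f ∘ σ = f),
      ((Equiv.Perm.sign σ : ℤ) : ℝ) = 0 := by
  classical
  rw [Function.not_injective_iff] at hf
  obtain ⟨a, b, hab, hne⟩ := hf
  refine Finset.sum_involution (fun σ _ => σ * Equiv.swap a b) ?_ ?_ ?_ ?_
  · intro σ _
    rw [Equiv.Perm.sign_mul, Equiv.Perm.sign_swap hne]
    push_cast
    ring
  · intro σ _ _
    exact (not_congr Equiv.mul_swap_eq_iff).mpr hne
  · intro σ hσ
    simp only [Finset.mem_filter, Finset.mem_univ, true_and] at hσ ⊢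
    funext x
    have h1 : f (σ (Equiv.swap a b x)) = f (Equiv.swap a b x) := congrFun hσ _
    simp only [Function.comp_apply, Equiv.Perm.coe_mul] at *
    rw [h1, Equiv.apply_swap_eq_self hab]
  · intro σ _
    exact Equiv.mul_swap_involutive a b σ

set_option maxHeartbeats 2000000 in
/-- For positive integers `m ≤ n` and an `m × n` random matrix `A`
whose entries are jointly independent with mean zero and unit variance (and finite
second moment), `E[det((1/n) A Aᵀ)] = (m!/n^m) C(n,m)`. -/
theorem expected_det_rectangular
    (m n : ℕ) (hm : 1 ≤ m) (hmn : m ≤ n)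
    (Ω : Type) [MeasureSpace Ω] [IsProbabilityMeasure (ℙ : Measure Ω)]
    (A : Ω → Matrix (Fin m) (Fin n) ℝ)
    (hmeas : ∀ i j, Measurable fun ω => A ω i j)
    (hL2 : ∀ i j, MemLp (fun ω => A ω i j) 2 ℙ)
    (hindep : iIndepFun
      (fun (q : Fin m × Fin n) ω => A ω q.1 q.2) ℙ)
    (hmean : ∀ i j, ∫ ω, A ω i j ∂ℙ = 0)
    (hvar : ∀ i j, variance (fun ω => A ω i j) ℙ = 1) :
    (∫ ω, (((n : ℝ)⁻¹ • (A ω * (A ω)ᵀ)).det) ∂ℙ)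
      = (m.factorial : ℝ) / (n : ℝ) ^ m * (n.choose m : ℝ) := by
  classical
  have hmono := fun (a b : Fin m → Fin n) =>
    aux_monomial A hmeas hL2 hindep hmean hvar a b
  -- pointwise expansion of the determinant
  have expand : ∀ ω : Ω, (A ω * (A ω)ᵀ).det
      = ∑ p : Fin m → Fin n, ∑ σ : Equiv.Perm (Fin m),
          ((Equiv.Perm.sign σ : ℤ) : ℝ) * ∏ i, A ω i (p (σ⁻¹ i)) * A ω i (p i) := by
    intro ω
    have h1 : (A ω * (A ω)ᵀ).det
        = ∑ p : Fin m → Fin n, ∑ σ : Equiv.Perm (Fin m),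
            ((Equiv.Perm.sign σ : ℤ) : ℝ) * ∏ i, A ω (σ i) (p i) * (A ω)ᵀ (p i) i := by
      simp only [det_apply', mul_apply, Finset.prod_univ_sum, Finset.mul_sum,
        Fintype.piFinset_univ]
      rw [Finset.sum_comm]
    rw [h1]
    refine Finset.sum_congr rfl fun p _ => Finset.sum_congr rfl fun σ _ => ?_
    congr 1
    calc ∏ i, A ω (σ i) (p i) * (A ω)ᵀ (p i) i
        = (∏ i, A ω (σ i) (p i)) * ∏ i, A ω i (p i) := by
          rw [Finset.prod_mul_distrib]
          simp [transpose_apply]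
      _ = (∏ i, A ω i (p (σ⁻¹ i))) * ∏ i, A ω i (p i) := by
          congr 1
          rw [← Equiv.prod_comp σ (fun j => A ω j (p (σ⁻¹ j)))]
          simp
      _ = ∏ i, A ω i (p (σ⁻¹ i)) * A ω i (p i) := Finset.prod_mul_distrib.symm
  -- integral of the determinant
  have hdet_int : ∫ ω, (A ω * (A ω)ᵀ).det ∂ℙ
      = ∑ p : Fin m → Fin n, ∑ σ : Equiv.Perm (Fin m),
          ((Equiv.Perm.sign σ : ℤ) : ℝ) *
            (if (fun i => p (σ⁻¹ i)) = p then (1 : ℝ) else 0) := by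
    rw [integral_congr_ae (Filter.Eventually.of_forall expand)]
    rw [integral_finset_sum _ (fun p _ => integrable_finset_sum _
      (fun σ _ => ((hmono (fun i => p (σ⁻¹ i)) p).1.const_mul _)))]
    refine Finset.sum_congr rfl fun p _ => ?_
    rw [integral_finset_sum _ (fun σ _ => ((hmono (fun i => p (σ⁻¹ i)) p).1.const_mul _))]
    refine Finset.sum_congr rfl fun σ _ => ?_
    rw [integral_const_mul, (hmono (fun i => p (σ⁻¹ i)) p).2]
  have hcond : ∀ (p : Fin m → Fin n) (σ : Equiv.Perm (Fin m)),
      ((fun i => p (σ⁻¹ i)) = p) ↔ (p ∘ σ = p) := by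
    intro p σ
    constructor
    · intro h; funext x
      have := congrFun h (σ x); simpa using this.symm
    · intro h; funext x
      have := congrFun h (σ⁻¹ x); simpa using this.symm
  have hinner : ∀ p : Fin m → Fin n,
      (∑ σ : Equiv.Perm (Fin m), ((Equiv.Perm.sign σ : ℤ) : ℝ) *
        (if (fun i => p (σ⁻¹ i)) = p then (1 : ℝ) else 0))
      = if Function.Injective p then 1 else 0 := by
    intro p
    have hsplit : ∀ σ : Equiv.Perm (Fin m),
        ((Equiv.Perm.sign σ : ℤ) : ℝ) * (if (fun i => p (σ⁻¹ i)) = p then (1 : ℝ) else 0)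
        = if p ∘ σ = p then ((Equiv.Perm.sign σ : ℤ) : ℝ) else 0 := by
      intro σ
      by_cases h : p ∘ σ = p
      · rw [if_pos h, if_pos ((hcond p σ).mpr h), mul_one]
      · rw [if_neg h, if_neg (fun hh => h ((hcond p σ).mp hh)), mul_zero]
    rw [Finset.sum_congr rfl fun σ _ => hsplit σ]
    by_cases hp : Function.Injective p
    · rw [if_pos hp]
      have hone : ∀ σ : Equiv.Perm (Fin m), (p ∘ σ = p) ↔ σ = 1 := by
        intro σ
        constructor
        · intro h
          refine Equiv.ext fun x => ?_
          simpa using hp (congrFun h x)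
        · rintro rfl
          funext x; simp
      simp only [hone]
      simp
    · rw [if_neg hp, ← Finset.sum_filter]
      exact aux_sign_sum p hp
  have houter : (∑ p : Fin m → Fin n, (if Function.Injective p then (1 : ℝ) else 0))
      = (n.descFactorial m : ℝ) := by
    rw [Finset.sum_boole]
    have h1 : (Finset.univ.filter (fun p : Fin m → Fin n => Function.Injective p)).card
        = Fintype.card (Fin m ↪ Fin n) := by
      rw [← Fintype.card_subtype]
      exact Fintype.card_congr (Equiv.subtypeInjectiveEquivEmbedding (Fin m) (Fin n))
    rw [h1, Fintype.card_embedding_eq, Fintype.card_fin, Fintype.card_fin]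
  have hsmul : ∀ ω : Ω, ((n : ℝ)⁻¹ • (A ω * (A ω)ᵀ)).det
      = ((n : ℝ)⁻¹) ^ m * (A ω * (A ω)ᵀ).det := by
    intro ω
    rw [det_smul]
    simp [Fintype.card_fin]
  have hn : (0 : ℝ) < (n : ℝ) := by
    have : 1 ≤ n := hm.trans hmn
    exact_mod_cast Nat.lt_of_lt_of_le Nat.zero_lt_one this
  calc ∫ ω, ((n : ℝ)⁻¹ • (A ω * (A ω)ᵀ)).det ∂ℙ
      = ∫ ω, ((n : ℝ)⁻¹) ^ m * (A ω * (A ω)ᵀ).det ∂ℙ :=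
        integral_congr_ae (Filter.Eventually.of_forall hsmul)
    _ = ((n : ℝ)⁻¹) ^ m * ∫ ω, (A ω * (A ω)ᵀ).det ∂ℙ := integral_const_mul _ _
    _ = ((n : ℝ)⁻¹) ^ m * (n.descFactorial m : ℝ) := by
        rw [hdet_int]
        congr 1
        rw [Finset.sum_congr rfl fun p _ => hinner p, houter]
    _ = (m.factorial : ℝ) / (n : ℝ) ^ m * (n.choose m : ℝ) := by
        rw [Nat.descFactorial_eq_factorial_mul_choose]
        push_cast
        field_simp
        rw [one_div, inv_pow, mul_comm, ← mul_assoc, mul_inv_cancel₀ (pow_ne_zero m hn.ne'), one_mul]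
end
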